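/- Let J ⊆ {1,…,p}, suppose Σ̂_J is symmetric positive definite, and let η = n^{-1}Σ̂_J^{-1}x_{n+1,J}/(1 + n^{-1}x_{n+1,J}'Σ̂_J^{-1}x_{n+1,J}). Suppose that on an interval [t_k, t_{k+1}] the augmented Lasso solution satisfies β̂_{J^c}(t) = 0 and β̂_J(t) = β̂_J(t_k) + η(t − t_k), and define the fitted residuals r_i(t) = y_i − x_i'β̂(t) for 1 ≤ i ≤ n and r_{n+1}(t) = x_{n+1}'β̂(0) + t − x_{n+1}'β̂(t). Then for all t ∈ [t_k, t_{k+1}]: r_i(t) = r_i(t_k) − [n^{-1}x_{i,J}'Σ̂_J^{-1}x_{n+1,J}/(1 + n^{-1}x_{n+1,J}'Σ̂_J^{-1}x_{n+1,J})](t − t_k) for each 1 ≤ i ≤ n, and r_{n+1}(t) = r_{n+1}(t_k) + [1/(1 + n^{-1}x_{n+1,J}'Σ̂_J^{-1}x_{n+1,J})](t − t_k). -/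

import Mathlib

open scoped BigOperators Matrix

noncomputable section

/-- Euclidean inner product on `Fin p → ℝ`. -/
def dotp {p : ℕ} (a b : Fin p → ℝ) : ℝ := ∑ j, a j * b j

/-- The Lasso objective `F(β) = (1/2)∑ᵢ (yᵢ − xᵢ'β)² + λ‖β‖₁`. -/
def lassoObj {n p : ℕ} (x : Fin n → Fin p → ℝ) (y : Fin n → ℝ) (lam : ℝ)
    (β : Fin p → ℝ) : ℝ :=
  (1 / 2) * ∑ i, (y i - dotp (x i) β) ^ 2 + lam * ∑ j, |β j|

/-- The augmented Lasso objective with `(x_{n+1}, ynew)` added as the `(n+1)`-th sample. -/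
def augObj {n p : ℕ} (x : Fin n → Fin p → ℝ) (y : Fin n → ℝ) (xnew : Fin p → ℝ)
    (lam : ℝ) (ynew : ℝ) (β : Fin p → ℝ) : ℝ :=
  lassoObj x y lam β + (1 / 2) * (ynew - dotp xnew β) ^ 2

/-- The submatrix `Σ̂_J` of the sample covariance matrix `Σ̂ = n⁻¹∑ᵢ xᵢxᵢ'`. -/
def gramJ {n p : ℕ} (x : Fin n → Fin p → ℝ) (J : Finset (Fin p)) : Matrix ↥J ↥J ℝ :=
  Matrix.of fun a b => (1 / (n : ℝ)) * ∑ i, x i a.1 * x i b.1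

/-- The subvector `u_J` of `u` with coordinates in `J`. -/
def subv {p : ℕ} (u : Fin p → ℝ) (J : Finset (Fin p)) : ↥J → ℝ := fun a => u a.1

/-- `Σ̂_J⁻¹ x_{n+1,J}`. -/
def invPart {n p : ℕ} (x : Fin n → Fin p → ℝ) (J : Finset (Fin p)) (xnew : Fin p → ℝ) :
    ↥J → ℝ :=
  (gramJ x J)⁻¹ *ᵥ subv xnew J

/-- The denominator `1 + n⁻¹ x_{n+1,J}'Σ̂_J⁻¹x_{n+1,J}`. -/
def denomC {n p : ℕ} (x : Fin n → Fin p → ℝ) (J : Finset (Fin p)) (xnew : Fin p → ℝ) : ℝ :=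
  1 + (1 / (n : ℝ)) * (subv xnew J ⬝ᵥ invPart x J xnew)

/-- The slope vector `η = n⁻¹Σ̂_J⁻¹x_{n+1,J} / (1 + n⁻¹x_{n+1,J}'Σ̂_J⁻¹x_{n+1,J})`,
extended by `0` off `J`. -/
def etaV {n p : ℕ} (x : Fin n → Fin p → ℝ) (J : Finset (Fin p)) (xnew : Fin p → ℝ) :
    Fin p → ℝ := fun j =>
  if h : j ∈ J then (1 / (n : ℝ)) * invPart x J xnew ⟨j, h⟩ / denomC x J xnew else 0

/-- The dual slope vector
`γ = (x_{n+1,J^c} − Σ̂_{J^c,J}Σ̂_J⁻¹x_{n+1,J}) / (1 + n⁻¹x_{n+1,J}'Σ̂_J⁻¹x_{n+1,J})`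
(only its coordinates off `J` are used). -/
def gammaV {n p : ℕ} (x : Fin n → Fin p → ℝ) (J : Finset (Fin p)) (xnew : Fin p → ℝ) :
    Fin p → ℝ := fun j =>
  (xnew j - ∑ a : ↥J, ((1 / (n : ℝ)) * ∑ i, x i j * x i a.1) * invPart x J xnew a) /
    denomC x J xnew

/-- `rpp a b` is `(a/b)₊₊ ∈ EReal`, the ratio `a/b` computed with the conventions
`0/0 = 0`, `z/0 = sign(z)·∞`, and then `(z)₊₊ = z` if `z > 0`, `(z)₊₊ = +∞` if `z ≤ 0`.
(When `b = 0` the result is always `+∞`, matching the conventions.) -/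
def rpp (a b : ℝ) : EReal := if b ≠ 0 ∧ 0 < a / b then ((a / b : ℝ) : EReal) else ⊤

/-- The first point of change
`t₁ = min_{j∈J}(−β̂_j/η_j)₊₊ ∧ min_{j∈J^c}((sign(γ_j)λ − v_j)/γ_j)₊₊`. -/
def tOne {n p : ℕ} (x : Fin n → Fin p → ℝ) (J : Finset (Fin p)) (xnew : Fin p → ℝ)
    (βhat v : Fin p → ℝ) (lam : ℝ) : EReal :=
  (J.inf fun j => rpp (-(βhat j)) (etaV x J xnew j)) ⊓
    (Jᶜ.inf fun j => rpp (Real.sign (gammaV x J xnew j) * lam - v j) (gammaV x J xnew j))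

/-- The homotopy solution `β(t)`: `β(t)_J = β̂_J + t·η`, `β(t)_{J^c} = 0`. -/
def betaT {n p : ℕ} (x : Fin n → Fin p → ℝ) (J : Finset (Fin p)) (xnew : Fin p → ℝ)
    (βhat : Fin p → ℝ) (t : ℝ) : Fin p → ℝ := fun j =>
  if j ∈ J then βhat j + t * etaV x J xnew j else 0

/-- evolution of the fitted residuals along one linear piece of the homotopy.
If on `[t_k, t_{k+1}]` the augmented Lasso solution satisfies `β̂_{J^c}(t) = 0` and
`β̂_J(t) = β̂_J(t_k) + η(t − t_k)`, then for all `t ∈ [t_k, t_{k+1}]`: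
`r_i(t) = r_i(t_k) − [n⁻¹x_{i,J}'Σ̂_J⁻¹x_{n+1,J}/(1 + n⁻¹x_{n+1,J}'Σ̂_J⁻¹x_{n+1,J})](t − t_k)`
for `1 ≤ i ≤ n`, and
`r_{n+1}(t) = r_{n+1}(t_k) + [1/(1 + n⁻¹x_{n+1,J}'Σ̂_J⁻¹x_{n+1,J})](t − t_k)`. -/
theorem lasso_residual_evolution {n p : ℕ} (x : Fin n → Fin p → ℝ) (y : Fin n → ℝ)
    (xnew β0 : Fin p → ℝ) (J : Finset (Fin p)) (hpd : (gramJ x J).PosDef)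
    (tk tk1 : ℝ) (B : ℝ → Fin p → ℝ)
    (hB : ∀ t ∈ Set.Icc tk tk1,
      (∀ j ∉ J, B t j = 0) ∧
      (∀ j ∈ J, B t j = B tk j + etaV x J xnew j * (t - tk))) :
    ∀ t ∈ Set.Icc tk tk1,
      (∀ i, y i - dotp (x i) (B t) =
        (y i - dotp (x i) (B tk)) -
          ((1 / (n : ℝ)) * (subv (x i) J ⬝ᵥ invPart x J xnew) / denomC x J xnew) * (t - tk)) ∧
      dotp xnew β0 + t - dotp xnew (B t) =
        (dotp xnew β0 + tk - dotp xnew (B tk)) + (1 / denomC x J xnew) * (t - tk) := by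
  intro t ht
  have htk : tk ∈ Set.Icc tk tk1 := ⟨le_refl _, le_trans ht.1 ht.2⟩
  -- positivity of the denominator
  have hq : 0 ≤ subv xnew J ⬝ᵥ invPart x J xnew := by
    have h1 : ((gramJ x J)⁻¹).PosSemidef := hpd.inv.posSemidef
    have := h1.re_dotProduct_nonneg (subv xnew J)
    simpa [invPart, dotProduct, mul_comm] using this
  have hd : 0 < denomC x J xnew := by
    have hn : (0:ℝ) ≤ 1 / (n:ℝ) := by positivity
    have : (0:ℝ) ≤ (1 / (n:ℝ)) * (subv xnew J ⬝ᵥ invPart x J xnew) := mul_nonneg hn hq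
    unfold denomC; linarith
  -- main computation of dot products
  have key : ∀ a : Fin p → ℝ, dotp a (B t) = dotp a (B tk) +
      ((1 / (n:ℝ)) * (subv a J ⬝ᵥ invPart x J xnew) / denomC x J xnew) * (t - tk) := by
    intro a
    have hsum : ∀ s : ℝ, s ∈ Set.Icc tk tk1 → dotp a (B s) = ∑ j ∈ J, a j * B s j := by
      intro s hs
      rw [dotp]
      rw [← Finset.sum_subset (Finset.subset_univ J)]
      intro j _ hj
      rw [(hB s hs).1 j hj, mul_zero]
    have heta : ∑ j ∈ J, a j * etaV x J xnew j =
        (1 / (n:ℝ)) * (subv a J ⬝ᵥ invPart x J xnew) / denomC x J xnew := by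
      rw [dotProduct, Finset.mul_sum, Finset.sum_div, Finset.univ_eq_attach,
        ← Finset.sum_attach J (fun j => a j * etaV x J xnew j)]
      refine Finset.sum_congr rfl ?_
      intro b _
      rw [etaV, dif_pos b.2]
      simp [subv]
      ring
    rw [hsum t ht, hsum tk htk]
    have : ∑ j ∈ J, a j * B t j =
        ∑ j ∈ J, (a j * B tk j + a j * etaV x J xnew j * (t - tk)) := by
      refine Finset.sum_congr rfl ?_
      intro j hj
      rw [(hB t ht).2 j hj]; ring
    rw [this, Finset.sum_add_distrib, ← heta]
    rw [← Finset.sum_mul, Finset.sum_mul]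
  constructor
  · intro i
    rw [key (x i)]; ring
  · rw [key xnew]
    have hmain : (1:ℝ) - (1 / (n:ℝ)) * (subv xnew J ⬝ᵥ invPart x J xnew) / denomC x J xnew
        = 1 / denomC x J xnew := by
      rw [sub_div' (ne_of_gt hd)]
      · congr 1
        unfold denomC; ring
    linear_combination (t - tk) * hmain
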